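/- Over the alphabet {0, 1}, the complement of the iterated shuffle of the set S = {00, 000, 11, 111, 01, 10} is exactly the finite set {0, 1, 001, 010, 100, 011, 101, 110}; in particular S^† is co-finite. -/

import Mathlib

/-- `Shuffle u v w` means that the word `w` is an interleaving (shuffle) of the
words `u` and `v`. -/
inductive Shuffle {α : Type*} : List α → List α → List α → Prop
  | nil : Shuffle [] [] []
  | left {a : α} {u v w : List α} : Shuffle u v w → Shuffle (a :: u) v (a :: w)
  | right {a : α} {u v w : List α} : Shuffle u v w → Shuffle u (a :: v) (a :: w)

/-- `IterShuffle S y` means `y` belongs to the iterated shuffle `S^†`, i.e. `y`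
can be obtained by shuffling together finitely many (possibly zero) words of `S`. -/
inductive IterShuffle {α : Type*} (S : Set (List α)) : List α → Prop
  | nil : IterShuffle S []
  | step {u w y : List α} : u ∈ S → IterShuffle S w → Shuffle u w y → IterShuffle S y

abbrev S0 : Set (List (Fin 2)) := {[0, 0], [0, 0, 0], [1, 1], [1, 1, 1], [0, 1], [1, 0]}

abbrev Bad8 : Set (List (Fin 2)) :=
  {[0], [1], [0, 0, 1], [0, 1, 0], [1, 0, 0], [0, 1, 1], [1, 0, 1], [1, 1, 0]}

def Bad (a b : ℕ) : Prop :=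
  (a = 1 ∧ b = 0) ∨ (a = 0 ∧ b = 1) ∨ (a = 2 ∧ b = 1) ∨ (a = 1 ∧ b = 2)

lemma shuffle_nil_left {α : Type*} (l : List α) : Shuffle [] l l := by
  induction l with
  | nil => exact .nil
  | cons a t ih => exact .right ih

lemma shuffle_count {α : Type*} [DecidableEq α] (c : α) {u v w : List α}
    (h : Shuffle u v w) : w.count c = u.count c + v.count c := by
  induction h with
  | nil => simp
  | left h ih => simp [List.count_cons, ih]; omega
  | right h ih => simp [List.count_cons, ih]; omega

lemma count01 (y : List (Fin 2)) : y.count 0 + y.count 1 = y.length := by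
  induction y with
  | nil => simp
  | cons a t ih =>
    fin_cases a <;> simp [List.count_cons] <;> omega

lemma shuffle_replicate (c : Fin 2) (y : List (Fin 2)) :
    ∀ n : ℕ, n ≤ y.count c →
      ∃ w, Shuffle (List.replicate n c) w y ∧ w.count c + n = y.count c ∧
        ∀ d, d ≠ c → w.count d = y.count d := by
  induction y with
  | nil =>
    intro n hn
    simp at hn
    subst hn
    exact ⟨[], shuffle_nil_left [], by simp, fun d _ => rfl⟩
  | cons a t ih =>
    intro n hn
    match n with
    | 0 => exact ⟨a :: t, shuffle_nil_left _, by simp, fun d _ => rfl⟩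
    | m + 1 =>
      by_cases hac : a = c
      · subst hac
        have hm : m ≤ t.count a := by simp [List.count_cons] at hn; omega
        obtain ⟨w, hs, h1, h2⟩ := ih m hm
        refine ⟨w, ?_, ?_, ?_⟩
        · rw [List.replicate_succ]; exact .left hs
        · simp [List.count_cons]; omega
        · intro d hd
          rw [h2 d hd, List.count_cons]
          simp [Ne.symm hd]
      · have hm : m + 1 ≤ t.count c := by simp [List.count_cons, hac] at hn; omega
        obtain ⟨w, hs, h1, h2⟩ := ih (m + 1) hm
        refine ⟨a :: w, .right hs, ?_, ?_⟩
        · simp [List.count_cons, hac]; omega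
        · intro d hd
          simp [List.count_cons, h2 d hd]

lemma shuffle_mixed (y : List (Fin 2)) (h0 : 1 ≤ y.count 0) (h1 : 1 ≤ y.count 1) :
    ∃ u w, (u = ([0, 1] : List (Fin 2)) ∨ u = [1, 0]) ∧ Shuffle u w y ∧
      w.count 0 + 1 = y.count 0 ∧ w.count 1 + 1 = y.count 1 := by
  cases y with
  | nil => simp at h0
  | cons a t =>
    fin_cases a
    · -- a = 0
      have h1' : 1 ≤ t.count 1 := by simpa [List.count_cons] using h1
      obtain ⟨w, hs, hc1, hcd⟩ := shuffle_replicate 1 t 1 h1'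
      refine ⟨[0, 1], w, Or.inl rfl, ?_, ?_, ?_⟩
      · exact .left (by simpa using hs)
      · have := hcd 0 (by decide); simp [List.count_cons, this]
      · simp [List.count_cons]; omega
    · -- a = 1
      have h0' : 1 ≤ t.count 0 := by simpa [List.count_cons] using h0
      obtain ⟨w, hs, hc0, hcd⟩ := shuffle_replicate 0 t 1 h0'
      refine ⟨[1, 0], w, Or.inr rfl, ?_, ?_, ?_⟩
      · exact .left (by simpa using hs)
      · simp [List.count_cons]; omega
      · have := hcd 1 (by decide); simp [List.count_cons, this]

lemma invariant {y : List (Fin 2)} (h : IterShuffle S0 y) :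
    ¬ Bad (y.count 0) (y.count 1) := by
  induction h with
  | nil => simp [Bad]
  | @step u w y hu _ hs ih =>
    have e0 := shuffle_count 0 hs
    have e1 := shuffle_count 1 hs
    simp only [S0, Set.mem_insert_iff, Set.mem_singleton_iff] at hu
    unfold Bad at ih ⊢
    rcases hu with rfl | rfl | rfl | rfl | rfl | rfl <;>
      simp -failIfUnchanged only [show ([0,0] : List (Fin 2)).count 0 = 2 from rfl] at * <;>
      · revert e0 e1
        norm_num [List.count_cons]
        omega

lemma mem_bad8_bad {y : List (Fin 2)} (h : y ∈ Bad8) : Bad (y.count 0) (y.count 1) := by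
  simp only [Bad8, Set.mem_insert_iff, Set.mem_singleton_iff] at h
  rcases h with rfl | rfl | rfl | rfl | rfl | rfl | rfl | rfl <;> simp [Bad]

lemma bad_mem8 {y : List (Fin 2)} (h : Bad (y.count 0) (y.count 1)) : y ∈ Bad8 := by
  have hsum := count01 y
  have hlen : y.length = 1 ∨ y.length = 3 := by unfold Bad at h; omega
  rcases hlen with h1 | h3
  · obtain ⟨x, rfl⟩ := List.length_eq_one_iff.mp h1
    fin_cases x <;> simp [Bad8]
  · obtain ⟨x1, x2, x3, rfl⟩ := List.length_eq_three.mp h3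
    fin_cases x1 <;> fin_cases x2 <;> fin_cases x3 <;>
      simp_all [Bad, Bad8]

lemma complete : ∀ (n : ℕ) (y : List (Fin 2)), y.length = n → y ∉ Bad8 →
    IterShuffle S0 y := by
  intro n
  induction n using Nat.strong_induction_on with
  | _ n ih =>
  intro y hlen hy
  have hsum : y.count 0 + y.count 1 = y.length := count01 y
  have hbady : ¬ Bad (y.count 0) (y.count 1) := fun h => hy (bad_mem8 h)
  have key : ∀ (u w : List (Fin 2)), u ∈ S0 → Shuffle u w y → w.length < n →
      ¬ Bad (w.count 0) (w.count 1) → IterShuffle S0 y := by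
    intro u w hu hs hlw hbw
    exact .step hu (ih w.length hlw w rfl (fun hmem => hbw (mem_bad8_bad hmem))) hs
  by_cases hn0 : y.length = 0
  · rw [List.length_eq_zero_iff.mp hn0]; exact .nil
  by_cases hb0 : y.count 1 = 0
  · -- all zeros, count 0 ≥ 2
    have ha2 : 2 ≤ y.count 0 := by unfold Bad at hbady; omega
    by_cases ha3 : y.count 0 = 3
    · obtain ⟨w, hs, h1, h2⟩ := shuffle_replicate 0 y 3 (by omega)
      have hw1 : w.count 1 = y.count 1 := h2 1 (by decide)
      have hwsum := count01 w
      refine key _ w ?_ (by simpa using hs) (by omega) ?_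
      · simp [S0]
      · unfold Bad; omega
    · obtain ⟨w, hs, h1, h2⟩ := shuffle_replicate 0 y 2 (by omega)
      have hw1 : w.count 1 = y.count 1 := h2 1 (by decide)
      have hwsum := count01 w
      refine key _ w ?_ (by simpa using hs) (by omega) ?_
      · simp [S0]
      · unfold Bad; omega
  by_cases ha0 : y.count 0 = 0
  · have hb2 : 2 ≤ y.count 1 := by unfold Bad at hbady; omega
    by_cases hb3 : y.count 1 = 3
    · obtain ⟨w, hs, h1, h2⟩ := shuffle_replicate 1 y 3 (by omega)
      have hw0 : w.count 0 = y.count 0 := h2 0 (by decide)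
      have hwsum := count01 w
      refine key _ w ?_ (by simpa using hs) (by omega) ?_
      · simp [S0]
      · unfold Bad; omega
    · obtain ⟨w, hs, h1, h2⟩ := shuffle_replicate 1 y 2 (by omega)
      have hw0 : w.count 0 = y.count 0 := h2 0 (by decide)
      have hwsum := count01 w
      refine key _ w ?_ (by simpa using hs) (by omega) ?_
      · simp [S0]
      · unfold Bad; omega
  -- both letters present
  by_cases h32 : y.count 0 = 3 ∧ y.count 1 = 2
  · obtain ⟨w, hs, h1, h2⟩ := shuffle_replicate 0 y 3 (by omega)
    have hw1 : w.count 1 = y.count 1 := h2 1 (by decide)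
    have hwsum := count01 w
    refine key _ w ?_ (by simpa using hs) (by omega) ?_
    · simp [S0]
    · unfold Bad; omega
  by_cases h23 : y.count 0 = 2 ∧ y.count 1 = 3
  · obtain ⟨w, hs, h1, h2⟩ := shuffle_replicate 1 y 3 (by omega)
    have hw0 : w.count 0 = y.count 0 := h2 0 (by decide)
    have hwsum := count01 w
    refine key _ w ?_ (by simpa using hs) (by omega) ?_
    · simp [S0]
    · unfold Bad; omega
  · obtain ⟨u, w, hu, hs, h0, h1⟩ := shuffle_mixed y (by omega) (by omega)
    have hwsum := count01 w
    refine key u w ?_ hs (by omega) ?_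
    · rcases hu with rfl | rfl <;> simp [S0]
    · unfold Bad at hbady ⊢; omega

/-- Over the alphabet `{0, 1}`, the complement of the iterated shuffle of
`S = {00, 000, 11, 111, 01, 10}` is exactly
`{0, 1, 001, 010, 100, 011, 101, 110}`; in particular `S^†` is co-finite. -/
theorem iterShuffle_binary_example :
    {w : List (Fin 2) |
        ¬ IterShuffle ({[0, 0], [0, 0, 0], [1, 1], [1, 1, 1], [0, 1], [1, 0]} :
          Set (List (Fin 2))) w} =
      {[0], [1], [0, 0, 1], [0, 1, 0], [1, 0, 0], [0, 1, 1], [1, 0, 1], [1, 1, 0]} ∧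
    {w : List (Fin 2) |
        ¬ IterShuffle ({[0, 0], [0, 0, 0], [1, 1], [1, 1, 1], [0, 1], [1, 0]} :
          Set (List (Fin 2))) w}.Finite := by
  have heq : {w : List (Fin 2) | ¬ IterShuffle S0 w} = Bad8 := by
    ext y
    simp only [Set.mem_setOf_eq]
    constructor
    · intro h
      by_contra hy
      exact h (complete y.length y rfl hy)
    · intro hy h
      exact invariant h (mem_bad8_bad hy)
  refine ⟨heq, ?_⟩
  rw [show {w : List (Fin 2) |
        ¬ IterShuffle ({[0, 0], [0, 0, 0], [1, 1], [1, 1, 1], [0, 1], [1, 0]} :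
          Set (List (Fin 2))) w} = Bad8 from heq]
  exact (((((((Set.finite_singleton _).insert _).insert _).insert _).insert _).insert
    _).insert _).insert _
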